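/- arXiv:2210.10286 — 2 statements merged into one kernel-verified Lean document; each statement's English description precedes it below -/
import Mathlib

section
/- Let E be a real topological vector space whose topology is generated by a p-seminorm (0 < p ≤ 1), and let C be a bounded closed p-convex subset of E with 0 in the interior of C. Define r : E → E by r(x) = x / max{1, (P_C(x))^(1/p)}, where P_C is the Minkowski p-functional of C. Then r is a continuous retraction of E onto C; moreover: (1) if x ∈ C then r(x) = x; (2) if x ∉ C then r(x) lies in the boundary ∂C of C; (3) if x ∉ C then P_C(x) > 1. -/
open Set Pointwise

noncomputable section

/-- A subset `A` of a real vector space is `p`-convex. -/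
def PConvex (p : ℝ) {X : Type*} [AddCommGroup X] [Module ℝ X] (A : Set X) : Prop :=
  ∀ x ∈ A, ∀ y ∈ A, ∀ s t : ℝ, 0 ≤ s → 0 ≤ t → s ^ p + t ^ p = 1 →
    s ^ (1 / p) • x + t ^ (1 / p) • y ∈ A

/-- The Minkowski `p`-functional of a set `V`: `P_V(x) = inf {α > 0 : x ∈ α^(1/p) • V}`. -/
def MinkowskiP (p : ℝ) {E : Type*} [AddCommGroup E] [Module ℝ E] (V : Set E) (x : E) : ℝ :=
  sInf {α : ℝ | 0 < α ∧ x ∈ α ^ (1 / p) • V}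

namespace PConvexAux

lemma rpow_inv_rpow' {p a : ℝ} (hp : 0 < p) (ha : 0 ≤ a) : (a ^ (1 / p)) ^ p = a := by
  rw [← Real.rpow_mul ha, one_div, inv_mul_cancel₀ hp.ne', Real.rpow_one]

lemma rpow_rpow_inv' {p a : ℝ} (hp : 0 < p) (ha : 0 ≤ a) : (a ^ p) ^ (1 / p) = a := by
  rw [← Real.rpow_mul ha, one_div, mul_inv_cancel₀ hp.ne', Real.rpow_one]

variable {E : Type*} [AddCommGroup E] [Module ℝ E] {p : ℝ} {C : Set E}

lemma star (hp : 0 < p) (hCp : PConvex p C) (h0 : (0 : E) ∈ C)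
    {x : E} (hx : x ∈ C) {μ : ℝ} (h0μ : 0 ≤ μ) (hμ1 : μ ≤ 1) : μ • x ∈ C := by
  have hs : (0:ℝ) ≤ μ ^ p := Real.rpow_nonneg h0μ p
  have hs1 : (μ ^ p) ^ p ≤ 1 :=
    Real.rpow_le_one hs (Real.rpow_le_one h0μ hμ1 hp.le) hp.le
  have ht : (0:ℝ) ≤ (1 - (μ ^ p) ^ p) ^ (1 / p) := Real.rpow_nonneg (by linarith) _
  have key := hCp x hx 0 h0 (μ ^ p) ((1 - (μ ^ p) ^ p) ^ (1 / p)) hs ht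
    (by rw [rpow_inv_rpow' hp (by linarith)]; ring)
  rw [rpow_rpow_inv' hp h0μ, smul_zero, add_zero] at key
  exact key

lemma scale_up (hp : 0 < p) (hCp : PConvex p C) (h0 : (0 : E) ∈ C)
    {x : E} {α β : ℝ} (hα : 0 < α) (hαβ : α ≤ β) (hx : x ∈ α ^ (1 / p) • C) :
    x ∈ β ^ (1 / p) • C := by
  obtain ⟨c, hc, rfl⟩ := hx
  have hβ : 0 < β := hα.trans_le hαβ
  refine ⟨(α / β) ^ (1 / p) • c,
    star hp hCp h0 hc (Real.rpow_nonneg (by positivity) _)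
      (Real.rpow_le_one (by positivity) ((div_le_one hβ).2 hαβ) (by positivity)), ?_⟩
  show β ^ (1 / p) • ((α / β) ^ (1 / p) • c) = α ^ (1 / p) • c
  rw [smul_smul, ← Real.mul_rpow hβ.le (by positivity)]
  congr 2
  field_simp

end PConvexAux

open PConvexAux Filter

theorem stmt1 {E : Type*} [AddCommGroup E] [Module ℝ E] [TopologicalSpace E]
    [IsTopologicalAddGroup E] [ContinuousSMul ℝ E]
    (p : ℝ) (hp0 : 0 < p) (hp1 : p ≤ 1)
    -- `P` is a `p`-seminorm generating the topology of `E`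
    (P : E → ℝ)
    (hP_nonneg : ∀ x, 0 ≤ P x)
    (hP_smul : ∀ (l : ℝ) (x : E), P (l • x) = |l| ^ p * P x)
    (hP_add : ∀ x y : E, P (x + y) ≤ P x + P y)
    (hP_top : ∀ x : E, (nhds x).HasBasis (fun ε : ℝ => 0 < ε)
      (fun ε => {y | P (y - x) < ε}))
    -- `C` is a bounded closed `p`-convex set with `0` in its interior
    (C : Set E) (hCb : Bornology.IsVonNBounded ℝ C) (hCcl : IsClosed C)
    (hCp : PConvex p C) (hC0 : (0 : E) ∈ interior C)
    -- the retraction `r(x) = x / max {1, (P_C x)^(1/p)}`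
    (r : E → E) (hr : ∀ x : E, r x = (max 1 ((MinkowskiP p C x) ^ (1 / p)))⁻¹ • x) :
    Continuous r ∧ (∀ x : E, r x ∈ C) ∧
    (∀ x ∈ C, r x = x) ∧
    (∀ x ∉ C, r x ∈ frontier C) ∧
    (∀ x ∉ C, 1 < MinkowskiP p C x) := by
  have h0C : (0 : E) ∈ C := interior_subset hC0
  have hp' : 0 < 1 / p := by positivity
  set S : E → Set ℝ := fun x => {α : ℝ | 0 < α ∧ x ∈ α ^ (1 / p) • C} with hSdef
  have hQdef : ∀ x, MinkowskiP p C x = sInf (S x) := fun x => rfl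
  set Q : E → ℝ := MinkowskiP p C with hQ
  -- a P-ball inside C
  obtain ⟨ε₀, hε₀, hball⟩ : ∃ ε > 0, ∀ z : E, P z < ε → z ∈ C := by
    have hmem : C ∈ nhds (0 : E) := mem_interior_iff_mem_nhds.1 hC0
    obtain ⟨ε, hε, hsub⟩ := (hP_top 0).mem_iff.1 hmem
    exact ⟨ε, hε, fun z hz => hsub (by simpa using hz)⟩
  -- small P means small Q
  have hSmem : ∀ (x : E) (δ : ℝ), 0 < δ → P x < ε₀ * δ → δ ∈ S x := by
    intro x δ hδ hx
    have hδ' : (0:ℝ) < δ ^ (1 / p) := Real.rpow_pos_of_pos hδ _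
    refine ⟨hδ, (Set.mem_smul_set_iff_inv_smul_mem₀ hδ'.ne' _ _).2 (hball _ ?_)⟩
    have habs : |(δ ^ (1 / p))⁻¹| = (δ ^ (1 / p))⁻¹ := abs_of_pos (by positivity)
    rw [hP_smul, habs, Real.inv_rpow hδ'.le, rpow_inv_rpow' hp0 hδ.le]
    calc δ⁻¹ * P x < δ⁻¹ * (ε₀ * δ) := by
          exact mul_lt_mul_of_pos_left hx (by positivity)
      _ = ε₀ := by field_simp
  -- S x is nonempty and bounded below
  have hSne : ∀ x, (S x).Nonempty := by
    intro x
    refine ⟨(P x + 1) / ε₀, hSmem x _ (div_pos (by linarith [hP_nonneg x]) hε₀) ?_⟩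
    rw [mul_div_cancel₀ _ hε₀.ne']
    linarith [hP_nonneg x]
  have hSbdd : ∀ x, BddBelow (S x) := fun x => ⟨0, fun α hα => hα.1.le⟩
  have hQ_nonneg : ∀ x, 0 ≤ Q x := fun x => le_csInf (hSne x) (fun α hα => hα.1.le)
  have hQ_le : ∀ x α, α ∈ S x → Q x ≤ α := fun x α h => csInf_le (hSbdd x) h
  have hgt : ∀ x α, Q x < α → α ∈ S x := by
    intro x α h
    obtain ⟨β, hβS, hβα⟩ := exists_lt_of_csInf_lt (hSne x) h
    exact ⟨hβS.1.trans hβα, scale_up hp0 hCp h0C hβS.1 hβα.le hβS.2⟩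
  have hQP : ∀ (x : E) (δ : ℝ), 0 < δ → P x < ε₀ * δ → Q x ≤ δ :=
    fun x δ hδ hx => hQ_le x δ (hSmem x δ hδ hx)
  -- closedness: the infimum is attained from above
  have hmem_of_le : ∀ (x : E) (a : ℝ), 0 < a → Q x ≤ a → (a ^ (1 / p))⁻¹ • x ∈ C := by
    intro x a ha hle
    have hseq : ∀ n : ℕ, ((a * (1 + 1 / ((n : ℝ) + 1))) ^ (1 / p))⁻¹ • x ∈ C := by
      intro n
      have h1 : (0:ℝ) < 1 / ((n : ℝ) + 1) := by positivity
      have hgtn : Q x < a * (1 + 1 / ((n : ℝ) + 1)) := lt_of_le_of_lt hle (by nlinarith)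
      have hpos : (0:ℝ) < (a * (1 + 1 / ((n : ℝ) + 1))) ^ (1 / p) :=
        Real.rpow_pos_of_pos (by positivity) _
      exact (Set.mem_smul_set_iff_inv_smul_mem₀ hpos.ne' _ _).1 (hgt x _ hgtn).2
    have h1 : Tendsto (fun n : ℕ => a * (1 + 1 / ((n : ℝ) + 1))) atTop (nhds a) := by
      have h2 : Tendsto (fun n : ℕ => 1 + 1 / ((n : ℝ) + 1)) atTop (nhds 1) := by
        simpa using tendsto_const_nhds.add (tendsto_one_div_add_atTop_nhds_zero_nat (𝕜 := ℝ))
      simpa using tendsto_const_nhds.mul h2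
    have h2 : Tendsto (fun n : ℕ => ((a * (1 + 1 / ((n : ℝ) + 1))) ^ (1 / p))⁻¹) atTop
        (nhds ((a ^ (1 / p))⁻¹)) :=
      (((Real.continuousAt_rpow_const a (1 / p) (Or.inl ha.ne')).tendsto.comp h1).inv₀
        (Real.rpow_pos_of_pos ha _).ne')
    exact hCcl.mem_of_tendsto (h2.smul_const x) (Filter.Eventually.of_forall hseq)
  have hmem_iff : ∀ x : E, x ∈ C ↔ Q x ≤ 1 := by
    intro x
    constructor
    · intro hx
      exact hQ_le x 1 ⟨one_pos, ⟨x, hx, by simp [Real.one_rpow]⟩⟩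
    · intro h
      have := hmem_of_le x 1 one_pos h
      simpa [Real.one_rpow] using this
  have stmt5 : ∀ x ∉ C, 1 < Q x := by
    intro x hx
    by_contra h
    push_neg at h
    exact hx ((hmem_iff x).2 h)
  -- interior points have Q < 1
  have hint : ∀ y ∈ interior C, Q y < 1 := by
    intro y hy
    have hc : Continuous (fun t : ℝ => t • y) := continuous_id.smul continuous_const
    have hmem : (fun t : ℝ => t • y) ⁻¹' interior C ∈ nhds (1 : ℝ) :=
      (isOpen_interior.preimage hc).mem_nhds (by simpa using hy)
    obtain ⟨δ, hδ, hsub⟩ := Metric.mem_nhds_iff.1 hmem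
    set t : ℝ := 1 + δ / 2 with htdef
    have ht1 : 1 < t := by rw [htdef]; linarith
    have ht0 : (0:ℝ) < t := by linarith
    have htC : t • y ∈ C := interior_subset (hsub (by
      rw [Metric.mem_ball, Real.dist_eq, htdef, show 1 + δ / 2 - 1 = δ / 2 by ring,
        abs_of_pos (by linarith)]
      linarith))
    have hβ : Q y ≤ t ^ (-p) := by
      refine hQ_le y _ ⟨Real.rpow_pos_of_pos ht0 _, ⟨t • y, htC, ?_⟩⟩
      show (t ^ (-p)) ^ (1 / p) • (t • y) = y
      rw [smul_smul, ← Real.rpow_mul ht0.le]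
      rw [show (-p) * (1 / p) = -1 by field_simp, Real.rpow_neg_one, inv_mul_cancel₀ ht0.ne',
        one_smul]
    have hlt : t ^ (-p) < 1 := Real.rpow_lt_one_of_one_lt_of_neg ht1 (by linarith)
    linarith
  -- r x ∈ C
  have stmt2 : ∀ x : E, r x ∈ C := by
    intro x
    rw [hr]
    by_cases h : Q x ≤ 1
    · have h1 : Q x ^ (1 / p) ≤ 1 := Real.rpow_le_one (hQ_nonneg x) h hp'.le
      rw [max_eq_left h1, inv_one, one_smul]
      exact (hmem_iff x).2 h
    · push_neg at h
      have h1 : 1 ≤ Q x ^ (1 / p) := Real.one_le_rpow h.le hp'.le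
      rw [max_eq_right h1]
      exact hmem_of_le x (Q x) (lt_trans one_pos h) le_rfl
  have stmt3 : ∀ x ∈ C, r x = x := by
    intro x hx
    have h1 : Q x ^ (1 / p) ≤ 1 := Real.rpow_le_one (hQ_nonneg x) ((hmem_iff x).1 hx) hp'.le
    rw [hr, max_eq_left h1, inv_one, one_smul]
  have stmt4 : ∀ x ∉ C, r x ∈ frontier C := by
    intro x hx
    have hq := stmt5 x hx
    have hq0 : 0 < Q x := lt_trans one_pos hq
    have hq1 : 1 ≤ Q x ^ (1 / p) := Real.one_le_rpow hq.le hp'.le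
    have hqp0 : (0:ℝ) < Q x ^ (1 / p) := Real.rpow_pos_of_pos hq0 _
    have hrx : r x = (Q x ^ (1 / p))⁻¹ • x := by rw [hr, max_eq_right hq1]
    rw [hCcl.frontier_eq]
    refine ⟨stmt2 x, fun hin => ?_⟩
    have hQr : Q (r x) < 1 := hint _ hin
    obtain ⟨β, hβS, hβ1⟩ := exists_lt_of_csInf_lt (hSne (r x)) hQr
    obtain ⟨c, hc, hce⟩ := hβS.2
    have hce' : β ^ (1 / p) • c = r x := hce
    have hxm : Q x * β ∈ S x := by
      refine ⟨mul_pos hq0 hβS.1, ⟨c, hc, ?_⟩⟩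
      show (Q x * β) ^ (1 / p) • c = x
      rw [Real.mul_rpow hq0.le hβS.1.le, mul_smul, hce', hrx, smul_inv_smul₀ hqp0.ne']
    have := hQ_le x _ hxm
    nlinarith
  -- subadditivity of Q ^ p
  have hRsub : ∀ x y : E, Q (x + y) ^ p ≤ Q x ^ p + Q y ^ p := by
    intro x y
    refine le_of_forall_pos_le_add ?_
    intro ε hε
    set α := (Q x ^ p + ε / 2) ^ (1 / p) with hαdef
    set β := (Q y ^ p + ε / 2) ^ (1 / p) with hβdef
    have hQxp : (0:ℝ) ≤ Q x ^ p := Real.rpow_nonneg (hQ_nonneg x) p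
    have hQyp : (0:ℝ) ≤ Q y ^ p := Real.rpow_nonneg (hQ_nonneg y) p
    have hα_pos : 0 < α := Real.rpow_pos_of_pos (by linarith) _
    have hβ_pos : 0 < β := Real.rpow_pos_of_pos (by linarith) _
    have hαx : Q x < α := by
      conv_lhs => rw [← rpow_rpow_inv' hp0 (hQ_nonneg x)]
      exact Real.rpow_lt_rpow hQxp (by linarith) hp'
    have hβy : Q y < β := by
      conv_lhs => rw [← rpow_rpow_inv' hp0 (hQ_nonneg y)]
      exact Real.rpow_lt_rpow hQyp (by linarith) hp'
    obtain ⟨c1, hc1, hc1e⟩ := (hgt x α hαx).2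
    obtain ⟨c2, hc2, hc2e⟩ := (hgt y β hβy).2
    have hc1e' : α ^ (1 / p) • c1 = x := hc1e
    have hc2e' : β ^ (1 / p) • c2 = y := hc2e
    set γ := (α ^ p + β ^ p) ^ (1 / p) with hγdef
    have hαp : (0:ℝ) < α ^ p := Real.rpow_pos_of_pos hα_pos p
    have hβp : (0:ℝ) < β ^ p := Real.rpow_pos_of_pos hβ_pos p
    have hγ_pos : 0 < γ := Real.rpow_pos_of_pos (by linarith) _
    have hγp : γ ^ p = α ^ p + β ^ p := rpow_inv_rpow' hp0 (by linarith)
    have hcond : (α / γ) ^ p + (β / γ) ^ p = 1 := by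
      rw [Real.div_rpow hα_pos.le hγ_pos.le, Real.div_rpow hβ_pos.le hγ_pos.le, hγp]
      field_simp
    have hkey := hCp c1 hc1 c2 hc2 (α / γ) (β / γ) (by positivity) (by positivity) hcond
    have hγS : γ ∈ S (x + y) := by
      refine ⟨hγ_pos, ⟨_, hkey, ?_⟩⟩
      show γ ^ (1 / p) • ((α / γ) ^ (1 / p) • c1 + (β / γ) ^ (1 / p) • c2) = x + y
      rw [smul_add, smul_smul, smul_smul,
        ← Real.mul_rpow hγ_pos.le (by positivity : (0:ℝ) ≤ α / γ),
        ← Real.mul_rpow hγ_pos.le (by positivity : (0:ℝ) ≤ β / γ),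
        show γ * (α / γ) = α by field_simp, show γ * (β / γ) = β by field_simp,
        hc1e', hc2e']
    have h1 : Q (x + y) ^ p ≤ γ ^ p :=
      Real.rpow_le_rpow (hQ_nonneg _) (hQ_le _ _ hγS) hp0.le
    have hαpv : α ^ p = Q x ^ p + ε / 2 := rpow_inv_rpow' hp0 (by linarith)
    have hβpv : β ^ p = Q y ^ p + ε / 2 := rpow_inv_rpow' hp0 (by linarith)
    rw [hγp, hαpv, hβpv] at h1
    linarith
  -- continuity of Q
  have hPneg : ∀ z : E, P (-z) = P z := by
    intro z
    have := hP_smul (-1) z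
    simpa [Real.one_rpow] using this
  have hQcont : Continuous Q := by
    have hR : Continuous (fun x => Q x ^ p) := by
      rw [continuous_iff_continuousAt]
      intro x₀
      rw [ContinuousAt, Metric.tendsto_nhds]
      intro ε hε
      rw [(hP_top x₀).eventually_iff]
      set η := (ε / 2) ^ (1 / p) with hηdef
      have hη : 0 < η := Real.rpow_pos_of_pos (by linarith) _
      have hηp : η ^ p = ε / 2 := rpow_inv_rpow' hp0 (by linarith)
      refine ⟨ε₀ * η, by positivity, fun y hy => ?_⟩
      have hy' : P (y - x₀) < ε₀ * η := hy
      have h1 : Q (y - x₀) ≤ η := hQP _ _ hη hy'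
      have h2 : Q (x₀ - y) ≤ η := by
        refine hQP _ _ hη ?_
        rw [show x₀ - y = -(y - x₀) by abel, hPneg]
        exact hy'
      have h1p : Q (y - x₀) ^ p ≤ ε / 2 := by
        rw [← hηp]; exact Real.rpow_le_rpow (hQ_nonneg _) h1 hp0.le
      have h2p : Q (x₀ - y) ^ p ≤ ε / 2 := by
        rw [← hηp]; exact Real.rpow_le_rpow (hQ_nonneg _) h2 hp0.le
      have hb1 : Q y ^ p ≤ Q x₀ ^ p + Q (y - x₀) ^ p := by
        have := hRsub x₀ (y - x₀)
        rwa [show x₀ + (y - x₀) = y by abel] at this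
      have hb2 : Q x₀ ^ p ≤ Q y ^ p + Q (x₀ - y) ^ p := by
        have := hRsub y (x₀ - y)
        rwa [show y + (x₀ - y) = x₀ by abel] at this
      rw [Real.dist_eq, abs_sub_lt_iff]
      constructor <;> linarith
    have hQeq : Q = fun x => (Q x ^ p) ^ (1 / p) :=
      funext fun x => (rpow_rpow_inv' hp0 (hQ_nonneg x)).symm
    rw [hQeq]
    exact hR.rpow_const fun x => Or.inr hp'.le
  have hrcont : Continuous r := by
    have hre : r = fun x => (max 1 (Q x ^ (1 / p)))⁻¹ • x := funext hr
    rw [hre]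
    have hm : Continuous fun x => max 1 (Q x ^ (1 / p)) :=
      continuous_const.max (hQcont.rpow_const fun x => Or.inr hp'.le)
    have hm0 : ∀ x, max 1 (Q x ^ (1 / p)) ≠ 0 :=
      fun x => (lt_of_lt_of_le one_pos (le_max_left _ _)).ne'
    exact (hm.inv₀ hm0).smul continuous_id
  exact ⟨hrcont, stmt2, stmt3, stmt4, stmt5⟩
end
end

section
/- Let E be a Hausdorff real topological vector space, 0 < p < 1, and x ∈ E. Then the p-convex hull of the singleton {x} is C_p({x}) = {t·x : t ∈ (0, 1]} if x ≠ 0, and C_p({x}) = {0} if x = 0; moreover its closure is cl(C_p({x})) = {t·x : t ∈ [0, 1]} if x ≠ 0, and {0} if x = 0. -/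
open Set

noncomputable section

/-- The `p`-convex hull of `A`: the smallest `p`-convex set containing `A`. -/
def PConvexHull (p : ℝ) {X : Type*} [AddCommGroup X] [Module ℝ X] (A : Set X) : Set X :=
  ⋂₀ {B : Set X | PConvex p B ∧ A ⊆ B}

section Aux
variable {E : Type*} [AddCommGroup E] [Module ℝ E] {p : ℝ}

lemma aux_le_one (hp0 : 0 < p) {s t : ℝ} (hs : 0 ≤ s) (ht : 0 ≤ t)
    (h : s ^ p + t ^ p = 1) : s ≤ 1 := by
  have hsp : s ^ p ≤ 1 := by nlinarith [Real.rpow_nonneg ht p]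
  have hse : (s ^ p) ^ (1/p) = s := by
    rw [← Real.rpow_mul hs, mul_one_div, div_self hp0.ne', Real.rpow_one]
  calc s = (s ^ p) ^ (1/p) := hse.symm
    _ ≤ 1 := Real.rpow_le_one (Real.rpow_nonneg hs p) hsp (by positivity)

/-- One scaling step: from `y ∈ B` we can reach `r • y` for `r ∈ [2^(1-1/p²), 1]`. -/
lemma aux_step (hp0 : 0 < p) {B : Set E} (hB : PConvex p B)
    {y : E} (hy : y ∈ B) {r : ℝ} (hr : (2:ℝ) ^ ((1:ℝ) - 1/p^2) ≤ r) (hr1 : r ≤ 1) :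
    r • y ∈ B := by
  set q : ℝ := 1/p^2 with hq
  have hq0 : 0 < q := by positivity
  have hcont : ContinuousOn (fun u : ℝ => u ^ q + (1-u) ^ q) (Icc 0 (1/2)) := by
    apply ContinuousOn.add
    · exact continuousOn_id.rpow_const (fun x _ => Or.inr hq0.le)
    · exact (continuousOn_const.sub continuousOn_id).rpow_const (fun x _ => Or.inr hq0.le)
  have hf0 : (fun u : ℝ => u ^ q + (1-u) ^ q) 0 = 1 := by
    simp [Real.zero_rpow hq0.ne', Real.one_rpow]
  have hfh : (fun u : ℝ => u ^ q + (1-u) ^ q) (1/2) = 2 ^ ((1:ℝ) - q) := by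
    have h12 : (1:ℝ) - 1/2 = 1/2 := by norm_num
    simp only [h12]
    have h2 : ((1:ℝ)/2) ^ q = 2 ^ (-q) := by
      rw [one_div, ← Real.rpow_neg_one 2, ← Real.rpow_mul (by norm_num : (0:ℝ) ≤ 2)]
      ring_nf
    rw [h2, ← two_mul,
      show (2:ℝ) * 2 ^ (-q) = 2 ^ (1:ℝ) * 2 ^ (-q) by rw [Real.rpow_one],
      ← Real.rpow_add (by norm_num : (0:ℝ) < 2)]
    ring_nf
  have hf0' : ((0:ℝ)) ^ q + (1-(0:ℝ)) ^ q = 1 := hf0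
  have hfh' : ((1:ℝ)/2) ^ q + (1-(1:ℝ)/2) ^ q = 2 ^ ((1:ℝ) - q) := hfh
  have hmem0 : r ∈ Icc (((1:ℝ)/2) ^ q + (1-(1:ℝ)/2) ^ q) (((0:ℝ)) ^ q + (1-(0:ℝ)) ^ q) := by
    rw [hf0', hfh']; exact ⟨hr, hr1⟩
  obtain ⟨u, hu, hfu⟩ := intermediate_value_Icc' (by norm_num : (0:ℝ) ≤ 1/2) hcont hmem0
  have hfu' : u ^ q + (1-u) ^ q = r := hfu
  have hu0 : 0 ≤ u := hu.1
  have hv0 : 0 ≤ 1 - u := by have := hu.2; linarith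
  have key : ∀ w : ℝ, 0 ≤ w → (w ^ (1/p)) ^ p = w := fun w hw => by
    rw [← Real.rpow_mul hw, one_div_mul_cancel hp0.ne', Real.rpow_one]
  have key2 : ∀ w : ℝ, 0 ≤ w → (w ^ (1/p)) ^ (1/p) = w ^ q := fun w hw => by
    rw [← Real.rpow_mul hw, hq, div_mul_div_comm, one_mul, ← sq]
  have hmem := hB y hy y hy (u ^ (1/p)) ((1-u) ^ (1/p))
    (Real.rpow_nonneg hu0 _) (Real.rpow_nonneg hv0 _)
    (by rw [key u hu0, key (1-u) hv0]; ring)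
  rw [key2 u hu0, key2 (1-u) hv0, ← add_smul] at hmem
  rwa [hfu'] at hmem

lemma aux_iter (hp0 : 0 < p) (hp1 : p ≤ 1) {B : Set E} (hB : PConvex p B) {y : E} (hy : y ∈ B) :
    ∀ n : ℕ, ∀ r : ℝ, ((2:ℝ) ^ ((1:ℝ) - 1/p^2)) ^ n ≤ r → r ≤ 1 → r • y ∈ B := by
  set m : ℝ := (2:ℝ) ^ ((1:ℝ) - 1/p^2) with hm
  have hm0 : 0 < m := Real.rpow_pos_of_pos (by norm_num) _
  have hm1 : m ≤ 1 := by
    apply Real.rpow_le_one_of_one_le_of_nonpos (by norm_num)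
    have : (1:ℝ) ≤ 1/p^2 := by
      rw [le_div_iff₀ (by positivity)]
      nlinarith
    linarith
  intro n
  induction n with
  | zero =>
    intro r hr hr1
    have : r = 1 := le_antisymm hr1 (by simpa using hr)
    rw [this, one_smul]; exact hy
  | succ n ih =>
    intro r hr hr1
    by_cases h : m ^ n ≤ r
    · exact ih r h hr1
    · push_neg at h
      have hmn0 : (0:ℝ) < m ^ n := pow_pos hm0 n
      have hyn : (m ^ n) • y ∈ B := ih (m ^ n) le_rfl (pow_le_one₀ hm0.le hm1)
      have ha1 : m ≤ r / m ^ n := by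
        rw [le_div_iff₀ hmn0]
        calc m * m ^ n = m ^ (n+1) := (pow_succ' m n).symm
          _ ≤ r := hr
      have ha2 : r / m ^ n ≤ 1 := by
        rw [div_le_one hmn0]; exact h.le
      have := aux_step hp0 hB hyn (r := r / m ^ n) ha1 ha2
      rwa [smul_smul, div_mul_cancel₀ _ hmn0.ne'] at this

lemma aux_reach (hp0 : 0 < p) (hp1 : p < 1) {B : Set E} (hB : PConvex p B) {y : E} (hy : y ∈ B)
    {r : ℝ} (hr0 : 0 < r) (hr1 : r ≤ 1) : r • y ∈ B := by
  set m : ℝ := (2:ℝ) ^ ((1:ℝ) - 1/p^2) with hm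
  have hm1 : m < 1 := by
    apply Real.rpow_lt_one_of_one_lt_of_neg (by norm_num)
    have : (1:ℝ) < 1/p^2 := by
      rw [lt_div_iff₀ (by positivity)]
      nlinarith
    linarith
  obtain ⟨n, hn⟩ := exists_pow_lt_of_lt_one hr0 hm1
  exact aux_iter hp0 hp1.le hB hy n r hn.le hr1

end Aux

theorem stmt2 {E : Type*} [AddCommGroup E] [Module ℝ E] [TopologicalSpace E]
    [IsTopologicalAddGroup E] [ContinuousSMul ℝ E] [T2Space E]
    (p : ℝ) (hp0 : 0 < p) (hp1 : p < 1) (x : E) :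
    (x ≠ 0 → PConvexHull p {x} = (fun t : ℝ => t • x) '' Set.Ioc (0 : ℝ) 1) ∧
    (x = 0 → PConvexHull p {x} = {0}) ∧
    (x ≠ 0 → closure (PConvexHull p {x}) = (fun t : ℝ => t • x) '' Set.Icc (0 : ℝ) 1) ∧
    (x = 0 → closure (PConvexHull p {x}) = {0}) := by
  -- the image set is p-convex
  have hSconv : PConvex p ((fun t : ℝ => t • x) '' Ioc (0:ℝ) 1) := by
    rintro a ⟨a0, ha0, rfl⟩ b ⟨b0, hb0, rfl⟩ s t hs ht hst
    refine ⟨s ^ (1/p) * a0 + t ^ (1/p) * b0, ⟨?_, ?_⟩, ?_⟩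
    · -- positivity
      have hst0 : 0 < s ∨ 0 < t := by
        by_contra h
        push_neg at h
        have hs0 : s = 0 := le_antisymm h.1 hs
        have ht0 : t = 0 := le_antisymm h.2 ht
        rw [hs0, ht0, Real.zero_rpow hp0.ne'] at hst
        norm_num at hst
      rcases hst0 with h | h
      · have h1 : 0 < s ^ (1/p) * a0 := mul_pos (Real.rpow_pos_of_pos h _) ha0.1
        have h2 : 0 ≤ t ^ (1/p) * b0 := mul_nonneg (Real.rpow_nonneg ht _) hb0.1.le
        linarith
      · have h1 : 0 < t ^ (1/p) * b0 := mul_pos (Real.rpow_pos_of_pos h _) hb0.1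
        have h2 : 0 ≤ s ^ (1/p) * a0 := mul_nonneg (Real.rpow_nonneg hs _) ha0.1.le
        linarith
    · -- bounded by 1
      have hs1 : s ≤ 1 := aux_le_one hp0 hs ht hst
      have ht1 : t ≤ 1 := aux_le_one hp0 ht hs (by rw [add_comm]; exact hst)
      have hple : p ≤ 1/p := le_trans hp1.le (one_le_one_div hp0 hp1.le)
      have e1 : s ^ (1/p) ≤ s ^ p := by
        rcases eq_or_lt_of_le hs with h | h
        · rw [← h, Real.zero_rpow hp0.ne', Real.zero_rpow (by positivity : (1:ℝ)/p ≠ 0)]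
        · exact Real.rpow_le_rpow_of_exponent_ge h hs1 hple
      have e2 : t ^ (1/p) ≤ t ^ p := by
        rcases eq_or_lt_of_le ht with h | h
        · rw [← h, Real.zero_rpow hp0.ne', Real.zero_rpow (by positivity : (1:ℝ)/p ≠ 0)]
        · exact Real.rpow_le_rpow_of_exponent_ge h ht1 hple
      have n1 : 0 ≤ s ^ (1/p) := Real.rpow_nonneg hs _
      have n2 : 0 ≤ t ^ (1/p) := Real.rpow_nonneg ht _
      nlinarith [ha0.1, hb0.1, ha0.2, hb0.2]
    · simp only [add_smul, smul_smul]
  -- the hull equals the image set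
  have hull_eq : PConvexHull p {x} = (fun t : ℝ => t • x) '' Ioc (0:ℝ) 1 := by
    apply subset_antisymm
    · apply sInter_subset_of_mem
      exact ⟨hSconv, singleton_subset_iff.mpr ⟨1, ⟨one_pos, le_rfl⟩, one_smul ℝ x⟩⟩
    · rintro y ⟨t, ht, rfl⟩
      rw [PConvexHull, mem_sInter]
      rintro B ⟨hBc, hxB⟩
      exact aux_reach hp0 hp1 hBc (hxB rfl) ht.1 ht.2
  -- closure of image of Ioc is image of Icc
  have hcl : closure ((fun t : ℝ => t • x) '' Ioc (0:ℝ) 1)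
      = (fun t : ℝ => t • x) '' Icc (0:ℝ) 1 := by
    apply subset_antisymm
    · apply closure_minimal (image_mono Ioc_subset_Icc_self)
      exact (isCompact_Icc.image (continuous_id.smul continuous_const)).isClosed
    · rintro y ⟨t, ht, rfl⟩
      rcases eq_or_lt_of_le ht.1 with h | h
      · rw [← h]
        have htd : Filter.Tendsto (fun n : ℕ => ((1:ℝ)/(n+1)) • x) Filter.atTop
            (nhds ((0:ℝ) • x)) := tendsto_one_div_add_atTop_nhds_zero_nat.smul_const x
        refine mem_closure_of_tendsto htd ?_
        · filter_upwards with n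
          refine ⟨1/(n+1), ⟨by positivity, ?_⟩, rfl⟩
          rw [div_le_one (by positivity)]
          have : (0:ℝ) ≤ n := Nat.cast_nonneg n
          linarith
      · exact subset_closure ⟨t, ⟨h, ht.2⟩, rfl⟩
  -- image is {0} when x = 0
  have himg0 : ∀ (hx : x = 0), (fun t : ℝ => t • x) '' Ioc (0:ℝ) 1 = {0} := by
    intro hx
    subst hx
    ext y
    simp only [mem_image, smul_zero, mem_singleton_iff]
    constructor
    · rintro ⟨t, -, h⟩; exact h.symm
    · rintro rfl; exact ⟨1, ⟨one_pos, le_rfl⟩, rfl⟩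
  refine ⟨fun _ => hull_eq, fun hx => by rw [hull_eq, himg0 hx],
    fun _ => by rw [hull_eq, hcl], fun hx => ?_⟩
  rw [hull_eq, himg0 hx, closure_singleton]
end
end
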